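/- Let T be a tree of sequences and p, q probability trees on T. Then Ξ_p(t) = Ξ_q(t) for all t ∈ T if and only if both of the following hold: (i) {t ∈ T : Ξ_p(t) > 0} = {t ∈ T : Ξ_q(t) > 0}; and (ii) for every t ∈ T and k ∈ ℕ with t ++ [k] ∈ T, if Ξ_p(t ++ [k]) > 0 then p t k = q t k. -/

import Mathlib

open scoped ENNReal
open MeasureTheory

noncomputable section

/-- A tree of sequences: a nonempty set of finite lists of naturals closed under prefixes. -/
def IsTree (T : Set (List ℕ)) : Prop :=
  T.Nonempty ∧ ∀ s t : List ℕ, s <+: t → t ∈ T → s ∈ T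

/-- `t` is a maximal node of `T`: it has no successor in `T`. -/
def IsMaxNode (T : Set (List ℕ)) (t : List ℕ) : Prop :=
  ∀ k : ℕ, t ++ [k] ∉ T

/-- A probability tree on `T`. -/
def IsProbTree (T : Set (List ℕ)) (p : List ℕ → ℕ → ℝ≥0∞) : Prop :=
  ∀ t ∈ T, ¬ IsMaxNode T t →
    (∀ k : ℕ, t ++ [k] ∉ T → p t k = 0) ∧ (∑' k : ℕ, p t k = 1)

/-- The measure induced by a probability tree: `Ξ_p(t) = ∏_{i<|t|} p (t↾i) (t i)`. -/
def Xi (p : List ℕ → ℕ → ℝ≥0∞) (t : List ℕ) : ℝ≥0∞ :=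
  ∏ i ∈ Finset.range t.length, p (t.take i) (t.getD i 0)

/-- An inductive probability measure on `T`. -/
def IsIPM (T : Set (List ℕ)) (ξ : List ℕ → ℝ≥0∞) : Prop :=
  ξ [] = 1 ∧ ∀ t ∈ T, ¬ IsMaxNode T t →
    ξ t = ∑' k : {k : ℕ // t ++ [k] ∈ T}, ξ (t ++ [k.1])

/-- The set of infinite branches of `T`. -/
def limT (T : Set (List ℕ)) : Set (ℕ → ℕ) :=
  {x | ∀ n : ℕ, (List.range n).map x ∈ T}

/-- `T` is pruned: every node has a successor in `T`. -/
def Pruned (T : Set (List ℕ)) : Prop := ∀ t ∈ T, ∃ k : ℕ, t ++ [k] ∈ T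

/-- The basic clopen set `[t]` of branches through `t`. -/
def cyl (T : Set (List ℕ)) (t : List ℕ) : Set ↥(limT T) :=
  {x | (List.range t.length).map x.1 = t}


lemma Xi_append (p : List ℕ → ℕ → ℝ≥0∞) (t : List ℕ) (k : ℕ) :
    Xi p (t ++ [k]) = Xi p t * p t k := by
  unfold Xi
  rw [List.length_append, List.length_singleton, Finset.prod_range_succ]
  congr 1
  · apply Finset.prod_congr rfl
    intro i hi
    rw [Finset.mem_range] at hi
    rw [List.take_append_of_le_length hi.le, List.getD_append _ _ _ _ hi]
  · rw [List.take_left, List.getD_append_right _ _ _ _ le_rfl]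
    simp

lemma Xi_le_one {T : Set (List ℕ)} {p : List ℕ → ℕ → ℝ≥0∞}
    (hT : IsTree T) (hp : IsProbTree T p) {t : List ℕ} (ht : t ∈ T) :
    Xi p t ≤ 1 := by
  unfold Xi
  apply Finset.prod_le_one (fun _ _ => zero_le)
  intro i hi
  rw [Finset.mem_range] at hi
  have hpre : t.take i ++ [t.getD i 0] <+: t := by
    rw [List.getD_eq_getElem _ _ hi]
    have h := List.take_concat_get hi
    rw [List.concat_eq_append] at h
    rw [h]
    exact List.take_prefix _ _
  have h1 : t.take i ∈ T := hT.2 _ _ (List.take_prefix _ _) ht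
  have h2 : t.take i ++ [t.getD i 0] ∈ T := hT.2 _ _ hpre ht
  have hnm : ¬ IsMaxNode T (t.take i) := fun h => h _ h2
  calc p (t.take i) (t.getD i 0) ≤ ∑' k, p (t.take i) k := ENNReal.le_tsum _
    _ = 1 := (hp _ h1 hnm).2

theorem stmt3 (T : Set (List ℕ)) (p q : List ℕ → ℕ → ℝ≥0∞)
    (hT : IsTree T) (hp : IsProbTree T p) (hq : IsProbTree T q) :
    (∀ t ∈ T, Xi p t = Xi q t) ↔
      (({t | t ∈ T ∧ 0 < Xi p t} = {t | t ∈ T ∧ 0 < Xi q t}) ∧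
        (∀ t ∈ T, ∀ k : ℕ, t ++ [k] ∈ T → 0 < Xi p (t ++ [k]) → p t k = q t k)) := by
  constructor
  · intro h
    constructor
    · ext t
      simp only [Set.mem_setOf_eq]
      exact ⟨fun ⟨ht, h0⟩ => ⟨ht, h _ ht ▸ h0⟩, fun ⟨ht, h0⟩ => ⟨ht, (h _ ht).symm ▸ h0⟩⟩
    · intro t ht k hk hpos
      have heq : Xi p t * p t k = Xi q t * q t k := by
        rw [← Xi_append, ← Xi_append]; exact h _ hk
      rw [Xi_append] at hpos
      have h0 : Xi p t ≠ 0 := by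
        intro h0; rw [h0, zero_mul] at hpos; exact lt_irrefl _ hpos
      have htop : Xi p t ≠ ⊤ := ne_top_of_le_ne_top ENNReal.one_ne_top (Xi_le_one hT hp ht)
      rw [h _ ht] at heq h0 htop
      exact (ENNReal.mul_right_inj h0 htop).mp heq
  · rintro ⟨hset, hpq⟩ t
    induction t using List.reverseRecOn with
    | nil => intro _; simp [Xi]
    | append_singleton s k ih =>
      intro hsk
      have hs : s ∈ T := hT.2 _ _ ⟨[k], rfl⟩ hsk
      have ihs := ih hs
      by_cases hpos : 0 < Xi p (s ++ [k])
      · rw [Xi_append, Xi_append, ihs, hpq s hs k hsk hpos]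
      · have h1 : Xi p (s ++ [k]) = 0 := by
          exact le_antisymm (not_lt.mp hpos) zero_le
        have h2 : Xi q (s ++ [k]) = 0 := by
          by_contra h2
          have : s ++ [k] ∈ {t | t ∈ T ∧ 0 < Xi q t} := ⟨hsk, pos_iff_ne_zero.mpr h2⟩
          rw [← hset] at this
          exact hpos this.2
        rw [h1, h2]
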